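/- Let N ≥ 3 and let a : ℝ → (0,∞)^{2N} be a differentiable solution of the periodic Volterra lattice equations ȧ_j = a_j(a_{j+1} − a_{j−1}). Then the matrices L₁(a(t)) = Σ_{j=1}^{2N} (a_{j+1}(t) E_{j+1,j} + E_{j,j+1}) and A₁(a(t)) = Σ_{j=1}^{2N} ((a_j(t) + a_{j+1}(t)) E_{j,j} + E_{j,j+2}) satisfy the Lax equation d/dt L₁(a(t)) = A₁(a(t))·L₁(a(t)) − L₁(a(t))·A₁(a(t)) for all t. -/

import Mathlib

open Matrix

instance neZeroTwoMul (N : ℕ) [NeZero N] : NeZero (2 * N) :=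
  ⟨by have := NeZero.ne N; omega⟩

/-- `Emat N r s` is the `2N × 2N` real matrix with a `1` in position `(r, s)`
and zeros elsewhere, indices taken mod `2N`. -/
noncomputable def Emat (N : ℕ) [NeZero N] (r s : ZMod (2 * N)) :
    Matrix (ZMod (2 * N)) (ZMod (2 * N)) ℝ :=
  Matrix.single r s 1

/-- The classical Lax matrix `L₁(a) = ∑ j, (a_{j+1} E_{j+1,j} + E_{j,j+1})`. -/
noncomputable def LaxL1 (N : ℕ) [NeZero N] (a : ZMod (2 * N) → ℝ) :
    Matrix (ZMod (2 * N)) (ZMod (2 * N)) ℝ :=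
  ∑ j : ZMod (2 * N), (a (j + 1) • Emat N (j + 1) j + Emat N j (j + 1))

/-- The companion matrix `A₁(a) = ∑ j, ((a_j + a_{j+1}) E_{j,j} + E_{j,j+2})`. -/
noncomputable def LaxA1 (N : ℕ) [NeZero N] (a : ZMod (2 * N) → ℝ) :
    Matrix (ZMod (2 * N)) (ZMod (2 * N)) ℝ :=
  ∑ j : ZMod (2 * N), ((a j + a (j + 1)) • Emat N j j + Emat N j (j + 2))

lemma LaxL1_apply (N : ℕ) [NeZero N] (a : ZMod (2 * N) → ℝ) (i j : ZMod (2 * N)) :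
    LaxL1 N a i j = (if i = j + 1 then a i else 0) + (if j = i + 1 then 1 else 0) := by
  rw [LaxL1, Matrix.sum_apply]
  simp only [Emat, Matrix.add_apply, Matrix.smul_apply, Matrix.single, Matrix.of_apply,
    smul_eq_mul, mul_ite, mul_one, mul_zero]
  rw [Finset.sum_add_distrib]
  congr 1
  · rw [Finset.sum_eq_single j]
    · by_cases h : i = j + 1 <;> simp [h, eq_comm]
    · intro b _ hb; simp [hb]
    · simp
  · rw [Finset.sum_eq_single i]
    · by_cases h : j = i + 1 <;> simp [h, eq_comm]
    · intro b _ hb; simp [hb]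
    · simp

lemma LaxA1_apply (N : ℕ) [NeZero N] (a : ZMod (2 * N) → ℝ) (i j : ZMod (2 * N)) :
    LaxA1 N a i j = (if j = i then a i + a (i + 1) else 0) + (if j = i + 2 then 1 else 0) := by
  rw [LaxA1, Matrix.sum_apply]
  simp only [Emat, Matrix.add_apply, Matrix.smul_apply, Matrix.single, Matrix.of_apply,
    smul_eq_mul, mul_ite, mul_one, mul_zero]
  rw [Finset.sum_add_distrib]
  congr 1
  · rw [Finset.sum_eq_single i]
    · by_cases h : j = i
      · simp [h]
      · simp [h, Ne.symm h]
    · intro b _ hb; simp [hb]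
    · simp
  · rw [Finset.sum_eq_single i]
    · by_cases h : j = i + 2
      · simp [h]
      · simp [h, Ne.symm h]
    · intro b _ hb; simp [hb]
    · simp

lemma mulAL_apply (N : ℕ) [NeZero N] (a : ZMod (2 * N) → ℝ) (i j : ZMod (2 * N)) :
    (LaxA1 N a * LaxL1 N a) i j
      = (a i + a (i + 1)) * LaxL1 N a i j + LaxL1 N a (i + 2) j := by
  rw [Matrix.mul_apply]
  simp only [LaxA1_apply, add_mul, ite_mul, zero_mul, one_mul]
  rw [Finset.sum_add_distrib]
  congr 1
  · rw [Finset.sum_eq_single i] <;> simp_all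
  · rw [Finset.sum_eq_single (i + 2)] <;> simp_all

lemma mulLA_apply (N : ℕ) [NeZero N] (a : ZMod (2 * N) → ℝ) (i j : ZMod (2 * N)) :
    (LaxL1 N a * LaxA1 N a) i j
      = a i * LaxA1 N a (i - 1) j + LaxA1 N a (i + 1) j := by
  rw [Matrix.mul_apply]
  have hL : ∀ k, LaxL1 N a i k = (if k = i - 1 then a i else 0) + (if k = i + 1 then 1 else 0) := by
    intro k
    have e : (i = k + 1) ↔ (k = i - 1) := by
      constructor <;> intro h <;> linear_combination -h
    rw [LaxL1_apply]
    simp only [e]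
  simp only [hL, add_mul, ite_mul, zero_mul, one_mul]
  rw [Finset.sum_add_distrib]
  congr 1
  · rw [Finset.sum_eq_single (i - 1)] <;> simp_all
  · rw [Finset.sum_eq_single (i + 1)] <;> simp_all

lemma comm_apply (N : ℕ) [NeZero N] (hN : 3 ≤ N) (a : ZMod (2 * N) → ℝ) (i j : ZMod (2 * N)) :
    (LaxA1 N a * LaxL1 N a - LaxL1 N a * LaxA1 N a) i j
      = if i = j + 1 then a i * (a (i + 1) - a (i - 1)) else 0 := by
  rw [Matrix.sub_apply, mulAL_apply, mulLA_apply]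
  simp only [LaxL1_apply, LaxA1_apply]
  have e1 : (i + 2 = j + 1) ↔ (j = i + 1) := by constructor <;> intro h <;> linear_combination -h
  have e2 : (j = (i + 2) + 1) ↔ (j = i + 3) := by
    constructor <;> intro h <;> linear_combination h
  have e3 : (j = i - 1) ↔ (i = j + 1) := by constructor <;> intro h <;> linear_combination -h
  have e4 : (j = (i - 1) + 2) ↔ (j = i + 1) := by
    constructor <;> intro h <;> linear_combination h
  have e5 : (j = (i + 1) + 2) ↔ (j = i + 3) := by
    constructor <;> intro h <;> linear_combination h
  simp only [e1, e2, e3, e4, e5]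
  have hi : i - 1 + 1 = i := by ring
  simp only [hi]
  split_ifs with h1 h2 h3 <;> ring

/-- For a differentiable positive solution of the periodic Volterra lattice, the
pair `(L₁, A₁)` satisfies the Lax equation `d/dt L₁(a(t)) = [A₁(a(t)), L₁(a(t))]`. -/
theorem volterra_lax_classical (N : ℕ) [NeZero N] (hN : 3 ≤ N)
    (a : ℝ → ZMod (2 * N) → ℝ)
    (hpos : ∀ t j, 0 < a t j)
    (hdiff : ∀ j, Differentiable ℝ fun t => a t j)
    (hvolt : ∀ t j, HasDerivAt (fun s => a s j) (a t j * (a t (j + 1) - a t (j - 1))) t) :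
    ∀ t i j, HasDerivAt (fun s => LaxL1 N (a s) i j)
      ((LaxA1 N (a t) * LaxL1 N (a t) - LaxL1 N (a t) * LaxA1 N (a t)) i j) t := by
  intro t i j
  rw [comm_apply N hN]
  have hfun : (fun s => LaxL1 N (a s) i j)
      = fun s => (if i = j + 1 then a s i else 0) + (if j = i + 1 then 1 else 0) := by
    funext s; rw [LaxL1_apply]
  rw [hfun]
  by_cases h : i = j + 1
  · simp only [if_pos h]
    exact (hvolt t i).add_const _
  · simp only [if_neg h]
    exact hasDerivAt_const _ _
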